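/- Every stable matching in a bipartite graph with strict preferences on both sides is popular. -/

import Mathlib

/-- A matching in a bipartite graph `G = (A ∪ B, E)`, given as a pair of
partner functions that are consistent and respect the edge set. -/
structure BMatching (A B : Type*) (E : A → B → Prop) where
  mA : A → Option B
  mB : B → Option A
  consistent : ∀ a b, mA a = some b ↔ mB b = some a
  valid : ∀ a b, mA a = some b → E a b

/-- Vote of a vertex with (strict, rank-based) preferences `r` comparing two
possible partners; being unmatched (`none`) is least preferred. -/
def voteRank {Y : Type*} (r : Y → ℕ) : Option Y → Option Y → ℤ
  | some y, some y' => if r y < r y' then 1 else if r y' < r y then -1 else 0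
  | some _, none => 1
  | none, some _ => -1
  | none, none => 0

/-- `y` is strictly better (for ranks `r`) than the possible partner `o`. -/
def improves {Y : Type*} (r : Y → ℕ) (y : Y) : Option Y → Prop
  | none => True
  | some y' => r y < r y'

lemma voteRank_none_nonneg {Y : Type*} (r : Y → ℕ) (o : Option Y) :
    0 ≤ voteRank r o none := by
  cases o <;> simp [voteRank]

lemma voteRank_self {Y : Type*} (r : Y → ℕ) (y : Y) :
    voteRank r (some y) (some y) = 0 := by
  simp [voteRank]

lemma vote_dichotomy {Y : Type*} (r : Y → ℕ) (hr : Function.Injective r)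
    {y : Y} {o : Option Y} (h : o ≠ some y) :
    (voteRank r o (some y) = 1 ∧ ¬ improves r y o) ∨
    (voteRank r o (some y) = -1 ∧ improves r y o) := by
  cases o with
  | none => exact Or.inr ⟨rfl, trivial⟩
  | some y' =>
    have hne : y' ≠ y := fun e => h (by rw [e])
    rcases lt_trichotomy (r y') (r y) with hlt | heq | hgt
    · left
      constructor
      · simp [voteRank, hlt]
      · simpa [improves] using not_lt_of_gt hlt
    · exact absurd (hr heq) hne
    · right
      constructor
      · simp [voteRank, hgt, not_lt_of_gt hgt]
      · simpa [improves] using hgt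

/-- Every stable matching in a bipartite graph with strict preferences on both
sides is popular: for every matching `N`, the number of vertices preferring `M`
is at least the number preferring `N`, i.e. the vote margin of `M` vs `N` is
nonnegative. -/
theorem stable_implies_popular
    {A B : Type*} [Fintype A] [Fintype B] (E : A → B → Prop)
    (rankA : A → B → ℕ) (rankB : B → A → ℕ)
    (hA : ∀ a, Function.Injective (rankA a))
    (hB : ∀ b, Function.Injective (rankB b))
    (M : BMatching A B E)
    (hstable : ∀ a b, E a b → M.mA a ≠ some b →
      ¬ (improves (rankA a) b (M.mA a) ∧ improves (rankB b) a (M.mB b))) :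
    ∀ N : BMatching A B E,
      0 ≤ (∑ a, voteRank (rankA a) (M.mA a) (N.mA a)) +
          (∑ b, voteRank (rankB b) (M.mB b) (N.mB b)) := by
  classical
  intro N
  set g := fun a => voteRank (rankA a) (M.mA a) (N.mA a) with hg
  set h := fun b => voteRank (rankB b) (M.mB b) (N.mB b) with hh
  -- key: for every N-edge, combined vote is nonnegative
  have key : ∀ a b, N.mA a = some b → 0 ≤ g a + h b := by
    intro a b hab
    have hb : N.mB b = some a := (N.consistent a b).mp hab
    by_cases hM : M.mA a = some b
    · have hMb : M.mB b = some a := (M.consistent a b).mp hM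
      simp [hg, hh, hab, hb, hM, hMb, voteRank_self]
    · have hM' : M.mB b ≠ some a := fun e => hM ((M.consistent a b).mpr e)
      have hst := hstable a b (N.valid a b hab) hM
      have d1 := vote_dichotomy (rankA a) (hA a) hM
      have d2 := vote_dichotomy (rankB b) (hB b) hM'
      have hga : g a = voteRank (rankA a) (M.mA a) (some b) := by rw [hg]; simp [hab]
      have hhb : h b = voteRank (rankB b) (M.mB b) (some a) := by rw [hh]; simp [hb]
      rcases d1 with ⟨e1, i1⟩ | ⟨e1, i1⟩ <;> rcases d2 with ⟨e2, i2⟩ | ⟨e2, i2⟩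
      · rw [hga, hhb, e1, e2]; norm_num
      · rw [hga, hhb, e1, e2]; norm_num
      · rw [hga, hhb, e1, e2]; norm_num
      · exact absurd ⟨i1, i2⟩ hst
  -- rewrite the B-sum
  have step1 : ∀ b, h b = (∑ a, if N.mA a = some b then h b else 0) +
      (if N.mB b = none then h b else 0) := by
    intro b
    cases hNb : N.mB b with
    | none =>
      have : ∀ a, ¬ (N.mA a = some b) := by
        intro a hc
        rw [(N.consistent a b).mp hc] at hNb
        exact Option.some_ne_none a hNb
      simp [this]
    | some a0 =>
      have hcond : ∀ a, (N.mA a = some b) ↔ (a0 = a) := by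
        intro a
        rw [N.consistent a b, hNb]
        constructor
        · intro e; exact (Option.some_inj.mp e)
        · intro e; rw [e]
      have : (∑ a, if N.mA a = some b then h b else 0)
          = ∑ a, if a0 = a then h b else 0 := by
        apply Finset.sum_congr rfl
        intro a _
        simp [hcond a]
      rw [this, Finset.sum_ite_eq]
      simp
  have hsum : ∑ b, h b = (∑ a, (N.mA a).elim 0 h) +
      ∑ b, (if N.mB b = none then h b else 0) := by
    calc ∑ b, h b
        = ∑ b, ((∑ a, if N.mA a = some b then h b else 0) +
            (if N.mB b = none then h b else 0)) := by
          exact Finset.sum_congr rfl fun b _ => step1 b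
      _ = (∑ b, ∑ a, if N.mA a = some b then h b else 0) +
            ∑ b, (if N.mB b = none then h b else 0) := Finset.sum_add_distrib
      _ = (∑ a, ∑ b, if N.mA a = some b then h b else 0) +
            ∑ b, (if N.mB b = none then h b else 0) := by rw [Finset.sum_comm]
      _ = (∑ a, (N.mA a).elim 0 h) +
            ∑ b, (if N.mB b = none then h b else 0) := by
          congr 1
          apply Finset.sum_congr rfl
          intro a _
          cases hNa : N.mA a with
          | none => simp
          | some b0 =>
            have : ∀ b, (some b0 = some b) ↔ (b0 = b) := fun b => Option.some_inj
            simp only [this]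
            rw [Finset.sum_ite_eq]
            simp
  have main : 0 ≤ ∑ a, (g a + (N.mA a).elim 0 h) := by
    apply Finset.sum_nonneg
    intro a _
    cases hNa : N.mA a with
    | none =>
      have : 0 ≤ g a := by rw [hg]; simp only [hNa]; exact voteRank_none_nonneg _ _
      simpa using this
    | some b => simpa using key a b hNa
  have rest : 0 ≤ ∑ b, (if N.mB b = none then h b else 0) := by
    apply Finset.sum_nonneg
    intro b _
    by_cases hNb : N.mB b = none
    · simp only [hNb, if_pos]
      rw [hh]; simp only [hNb]
      exact voteRank_none_nonneg _ _
    · simp [hNb]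
  have final : (∑ a, g a) + ∑ b, h b
      = (∑ a, (g a + (N.mA a).elim 0 h)) + ∑ b, (if N.mB b = none then h b else 0) := by
    rw [Finset.sum_add_distrib, hsum]
    ring
  rw [final]
  exact add_nonneg main rest
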